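/- arXiv:1605.06034 — 3 statements merged into one kernel-verified Lean document; each statement's English description precedes it below -/
import Mathlib

section
/- Let H be a complex Hilbert space, let A and B be positive bounded operators on H, and let T be a bounded operator on H such that A = B ∘ T. Then A ≤ ‖T‖ · B in the Loewner order (i.e., ‖T‖ · B − A is a positive operator). -/
open ContinuousLinearMap RCLike

local notation "⟪" x ", " y "⟫" => @inner ℂ _ _ x y

/-- Cauchy–Schwarz for the semi-inner product induced by a positive operator. -/
lemma cs_aux {H : Type*} [NormedAddCommGroup H] [InnerProductSpace ℂ H] [CompleteSpace H]
    (B : H →L[ℂ] H) (hB : B.IsPositive) (x y : H) :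
    (re ⟪B x, y⟫) ^ 2 ≤ re ⟪B x, x⟫ * re ⟪B y, y⟫ := by
  have hsymm := (isSelfAdjoint_iff_isSymmetric.mp hB.isSelfAdjoint)
  have key : ∀ t : ℝ, 0 ≤ re ⟪B y, y⟫ * (t * t) + (2 * re ⟪B x, y⟫) * t + re ⟪B x, x⟫ := by
    intro t
    have h0 := hB.re_inner_nonneg_left (x + (t : ℂ) • y)
    have hBxy : re ⟪B y, x⟫ = re ⟪B x, y⟫ := by
      rw [inner_re_symm]
      exact congrArg re (hsymm x y).symm
    simp only [map_add, map_smul, inner_add_left, inner_add_right, inner_smul_left,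
      inner_smul_right, Complex.conj_ofReal, RCLike.re_to_complex, Complex.add_re,
      Complex.mul_re, Complex.ofReal_re, Complex.ofReal_im, zero_mul, mul_zero,
      sub_zero] at h0 hBxy ⊢
    rw [hBxy] at h0
    nlinarith [h0]
  have hd := discrim_le_zero key
  rw [discrim] at hd
  nlinarith [hd]

set_option maxHeartbeats 1000000 in
/-- The key pointwise inequality. -/
lemma main_ineq {H : Type*} [NormedAddCommGroup H]
    [InnerProductSpace ℂ H] [CompleteSpace H]
    (A B T : H →L[ℂ] H) (hA : A.IsPositive) (hB : B.IsPositive)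
    (hABT : A = B ∘L T) (v : H) :
    re ⟪A v, v⟫ ≤ ‖T‖ * re ⟪B v, v⟫ := by
  have hBadj : ContinuousLinearMap.adjoint B = B := hB.isSelfAdjoint
  have hAadj : ContinuousLinearMap.adjoint A = A := hA.isSelfAdjoint
  -- T is symmetric w.r.t. the B-form
  have hsym : ∀ x y : H, ⟪B (T x), y⟫ = ⟪B x, T y⟫ := by
    intro x y
    have h2 : ContinuousLinearMap.adjoint T ∘L B = A := by
      rw [← hAadj, hABT, adjoint_comp, hBadj]
    calc ⟪B (T x), y⟫ = ⟪A x, y⟫ := by rw [hABT]; rfl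
      _ = ⟪(ContinuousLinearMap.adjoint T) (B x), y⟫ := by rw [← h2]; rfl
      _ = ⟪B x, T y⟫ := adjoint_inner_left T y (B x)
  have hsympow : ∀ (k : ℕ) (x y : H), ⟪B ((T ^ k) x), y⟫ = ⟪B x, (T ^ k) y⟫ := by
    intro k
    induction k with
    | zero => intro x y; simp
    | succ n ih =>
      intro x y
      have e1 : (T ^ (n + 1)) x = (T ^ n) (T x) := by rw [pow_succ]; rfl
      have e2 : T ((T ^ n) y) = (T ^ (n + 1)) y := by rw [pow_succ']; rfl
      rw [e1, ih (T x) y, hsym x ((T ^ n) y), e2]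
  have hdouble : ∀ (n : ℕ) (w : H), (T ^ (2 ^ (n + 1))) w = (T ^ (2 ^ n)) ((T ^ (2 ^ n)) w) := by
    intro n w
    rw [← ContinuousLinearMap.mul_apply, ← pow_add, ← two_mul, ← pow_succ']
  set a : ℝ := re ⟪A v, v⟫ with ha_def
  set b : ℝ := re ⟪B v, v⟫ with hb_def
  have ha0 : 0 ≤ a := hA.re_inner_nonneg_left v
  have hb0 : 0 ≤ b := hB.re_inner_nonneg_left v
  set s : ℕ → ℝ := fun n => re ⟪B ((T ^ (2 ^ n)) v), v⟫ with hs_def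
  have hs0 : s 0 = a := by
    simp only [hs_def, pow_zero, pow_one, ha_def, hABT]; rfl
  have hrec : ∀ n, (s n) ^ 2 ≤ s (n + 1) * b := by
    intro n
    have hcs := cs_aux B hB ((T ^ (2 ^ n)) v) v
    have e : ⟪B ((T ^ (2 ^ n)) v), (T ^ (2 ^ n)) v⟫ = ⟪B ((T ^ (2 ^ (n + 1))) v), v⟫ := by
      rw [hdouble n v, hsympow (2 ^ n) ((T ^ (2 ^ n)) v) v]
    rw [e] at hcs
    exact hcs
  have hiter : ∀ n, a ^ (2 ^ n) ≤ s n * b ^ (2 ^ n - 1) := by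
    intro n
    induction n with
    | zero => simp [hs0]
    | succ n ih =>
      have h1 : a ^ (2 ^ (n + 1)) = (a ^ (2 ^ n)) ^ 2 := by
        rw [← pow_mul, pow_succ]
      have h2 : (a ^ (2 ^ n)) ^ 2 ≤ (s n * b ^ (2 ^ n - 1)) ^ 2 :=
        pow_le_pow_left₀ (pow_nonneg ha0 _) ih 2
      have h3 : (s n * b ^ (2 ^ n - 1)) ^ 2 = (s n) ^ 2 * (b ^ (2 ^ n - 1)) ^ 2 := by ring
      have h4 : (s n) ^ 2 * (b ^ (2 ^ n - 1)) ^ 2 ≤ (s (n + 1) * b) * (b ^ (2 ^ n - 1)) ^ 2 :=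
        mul_le_mul_of_nonneg_right (hrec n) (by positivity)
      have h5 : (s (n + 1) * b) * (b ^ (2 ^ n - 1)) ^ 2 = s (n + 1) * b ^ (2 ^ (n + 1) - 1) := by
        rw [← pow_mul, mul_assoc, ← pow_succ']
        congr 2
        have : 1 ≤ 2 ^ n := Nat.one_le_two_pow
        omega
      linarith
  have hbound : ∀ n, s n ≤ (‖B‖ * ‖v‖ ^ 2) * ‖T‖ ^ (2 ^ n) := by
    intro n
    have hTn : ‖T ^ (2 ^ n)‖ ≤ ‖T‖ ^ (2 ^ n) := norm_pow_le' T (Nat.two_pow_pos n)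
    calc s n ≤ ‖⟪B ((T ^ (2 ^ n)) v), v⟫‖ := re_le_norm _
      _ ≤ ‖B ((T ^ (2 ^ n)) v)‖ * ‖v‖ := norm_inner_le_norm _ _
      _ ≤ (‖B‖ * (‖T ^ (2 ^ n)‖ * ‖v‖)) * ‖v‖ := by
          apply mul_le_mul_of_nonneg_right _ (norm_nonneg v)
          calc ‖B ((T ^ (2 ^ n)) v)‖ ≤ ‖B‖ * ‖(T ^ (2 ^ n)) v‖ := B.le_opNorm _
            _ ≤ ‖B‖ * (‖T ^ (2 ^ n)‖ * ‖v‖) :=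
                mul_le_mul_of_nonneg_left ((T ^ (2 ^ n)).le_opNorm v) (norm_nonneg B)
      _ = (‖B‖ * ‖v‖ ^ 2) * ‖T ^ (2 ^ n)‖ := by ring
      _ ≤ (‖B‖ * ‖v‖ ^ 2) * ‖T‖ ^ (2 ^ n) :=
          mul_le_mul_of_nonneg_left hTn (by positivity)
  -- conclude by contradiction
  by_contra hcon
  push_neg at hcon
  have hm0 : 0 ≤ ‖T‖ * b := mul_nonneg (norm_nonneg T) hb0
  have hapos : 0 < a := lt_of_le_of_lt hm0 hcon
  by_cases hT : T = 0
  · rw [hT] at hABT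
    simp only [comp_zero] at hABT
    have : a = 0 := by
      rw [ha_def, hABT]; simp
    linarith
  · have hTpos : 0 < ‖T‖ := norm_pos_iff.mpr hT
    by_cases hb : b = 0
    · have h1 : a ^ 2 ≤ s 1 * b ^ (2 - 1) := by
        have := hiter 1
        simpa using this
      rw [hb] at h1
      simp at h1
      nlinarith
    · have hbpos : 0 < b := lt_of_le_of_ne hb0 (Ne.symm hb)
      set m : ℝ := ‖T‖ * b with hm_def
      have hmpos : 0 < m := mul_pos hTpos hbpos
      set C : ℝ := ‖B‖ * ‖v‖ ^ 2 with hC_def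
      have hCb : ∀ n, a ^ (2 ^ n) * b ≤ C * m ^ (2 ^ n) := by
        intro n
        have h1 : a ^ (2 ^ n) * b ≤ (s n * b ^ (2 ^ n - 1)) * b :=
          mul_le_mul_of_nonneg_right (hiter n) hb0
        have h2 : (s n * b ^ (2 ^ n - 1)) * b = s n * b ^ (2 ^ n) := by
          rw [mul_assoc, ← pow_succ]
          congr 2
          have : 1 ≤ 2 ^ n := Nat.one_le_two_pow
          omega
        have h3 : s n * b ^ (2 ^ n) ≤ (C * ‖T‖ ^ (2 ^ n)) * b ^ (2 ^ n) :=
          mul_le_mul_of_nonneg_right (hbound n) (by positivity)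
        have h4 : (C * ‖T‖ ^ (2 ^ n)) * b ^ (2 ^ n) = C * m ^ (2 ^ n) := by
          rw [hm_def, mul_pow]; ring
        linarith
      have hr1 : 1 < a / m := (one_lt_div hmpos).mpr hcon
      have hrpow : ∀ n, (a / m) ^ (2 ^ n) ≤ C / b := by
        intro n
        rw [div_pow, div_le_div_iff₀ (by positivity) hbpos]
        exact hCb n
      obtain ⟨n, hn⟩ := pow_unbounded_of_one_lt (C / b) hr1
      have hle : (a / m) ^ n ≤ (a / m) ^ (2 ^ n) :=
        pow_le_pow_right₀ hr1.le (Nat.le_of_lt (Nat.lt_two_pow_self))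
      linarith [hrpow n]

/-- If `A` and `B` are positive bounded operators on a complex Hilbert
space `H` and `T` is a bounded operator with `A = B ∘ T`, then `A ≤ ‖T‖ • B` in the
Loewner order, i.e. `‖T‖ • B - A` is a positive operator. -/
theorem contraction_majorisation {H : Type*} [NormedAddCommGroup H]
    [InnerProductSpace ℂ H] [CompleteSpace H]
    (A B T : H →L[ℂ] H) (hA : A.IsPositive) (hB : B.IsPositive)
    (hABT : A = B ∘L T) :
    ((‖T‖ : ℂ) • B - A).IsPositive := by
  constructor
  · have h1 : IsSelfAdjoint ((‖T‖ : ℂ) • B) := by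
      rw [IsSelfAdjoint, star_smul, RCLike.star_def, Complex.conj_ofReal, hB.isSelfAdjoint.star_eq]
    exact isSelfAdjoint_iff_isSymmetric.mp (h1.sub hA.isSelfAdjoint)
  · intro v
    have hmv := main_ineq A B T hA hB hABT v
    simp only [reApplyInnerSelf, sub_apply, smul_apply, inner_sub_left, inner_smul_left,
      Complex.conj_ofReal, map_sub]
    have : re ((‖T‖ : ℂ) * ⟪B v, v⟫) = ‖T‖ * re ⟪B v, v⟫ := by
      simp [mul_re]
    rw [this]
    linarith
end

section
/- Let K and H be complex Hilbert spaces and let T : K → H be a bounded linear contraction (‖T‖ ≤ 1). Define the operator U_T on K ⊕ H by U_T(k, h) = ((1_K − T*T)^{1/2} k + T* h, T k − (1_H − TT*)^{1/2} h). Then U_T is a unitary operator on K ⊕ H, and for every k ∈ K one has T k = P(U_T(ι k)), where ι : K → K ⊕ H is the inclusion k ↦ (k, 0) and P : K ⊕ H → H is the projection (k, h) ↦ h. In particular, every contraction between Hilbert spaces dilates to a unitary on the direct sum. -/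
theorem WithLp.equiv_fst {p : ENNReal} {α β : Type*} (x : WithLp p (α × β)) :
    (WithLp.equiv p (α × β) x).fst = x.fst := rfl

theorem WithLp.equiv_snd {p : ENNReal} {α β : Type*} (x : WithLp p (α × β)) :
    (WithLp.equiv p (α × β) x).snd = x.snd := rfl

theorem WithLp.equiv_symm_fst {p : ENNReal} {α β : Type*} (x : α × β) :
    ((WithLp.equiv p (α × β)).symm x).fst = x.fst := rfl

theorem WithLp.equiv_symm_snd {p : ENNReal} {α β : Type*} (x : α × β) :
    ((WithLp.equiv p (α × β)).symm x).snd = x.snd := rfl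

theorem WithLp.prod_inner_apply' {𝕜 E F : Type*} [RCLike 𝕜]
    [NormedAddCommGroup E] [InnerProductSpace 𝕜 E] [NormedAddCommGroup F] [InnerProductSpace 𝕜 F]
    (x y : WithLp 2 (E × F)) : inner 𝕜 x y = inner 𝕜 x.fst y.fst + inner 𝕜 x.snd y.snd :=
  WithLp.prod_inner_apply x y

open StarAlgebra NNReal in
lemma commute_cfc_sqrt_of_commute {A : Type*} [CStarAlgebra A] [PartialOrder A]
    [StarOrderedRing A] {a b : A} (ha : 0 ≤ a) (hb : IsSelfAdjoint b)
    (hab : Commute a b) : Commute (CFC.sqrt a) b := by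
  have h1 : CFC.sqrt a = cfc (fun z : ℂ => (((NNReal.sqrt z.re.toNNReal : ℝ≥0) : ℝ) : ℂ)) a := by
    rw [CFC.sqrt_eq_cfc, cfc_nnreal_eq_real _ a ha, cfc_real_eq_complex _ (IsSelfAdjoint.of_nonneg ha)]
  have hmem : CFC.sqrt a ∈ elemental ℂ a := by
    rw [h1]
    by_cases hg : ContinuousOn (fun z : ℂ => (((NNReal.sqrt z.re.toNNReal : ℝ≥0) : ℝ) : ℂ)) (spectrum ℂ a)
    · rw [cfc_apply _ a (ha := (IsSelfAdjoint.of_nonneg ha).isStarNormal) (hf := hg),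
        cfcHom_eq_of_isStarNormal]
      exact SetLike.coe_mem _
    · rw [cfc_apply_of_not_continuousOn a hg]
      exact zero_mem _
  have hC : IsClosed {x : A | Commute x b} := by
    have : {x : A | Commute x b} = {x : A | x * b = b * x} := rfl
    rw [this]
    exact isClosed_eq (by fun_prop) (by fun_prop)
  have hsub : (elemental ℂ a : Set A) ⊆ {x : A | Commute x b} := by
    apply closure_minimal _ hC
    intro x hx
    induction hx using StarAlgebra.adjoin_induction with
    | mem x hx => simpa using (Set.mem_singleton_iff.mp hx ▸ hab)
    | algebraMap r => exact (Algebra.commutes r b)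
    | add x y _ _ hx hy => exact hx.add_left hy
    | mul x y _ _ hx hy => exact hx.mul_left hy
    | star x _ hx => simpa [hb.star_eq] using (hx.symm.star_star).symm
  exact hsub hmem

lemma one_sub_adjoint_comp_self_nonneg {K H : Type*}
    [NormedAddCommGroup K] [InnerProductSpace ℂ K] [CompleteSpace K]
    [NormedAddCommGroup H] [InnerProductSpace ℂ H] [CompleteSpace H]
    (T : K →L[ℂ] H) (hT : ‖T‖ ≤ 1) :
    0 ≤ 1 - (ContinuousLinearMap.adjoint T ∘L T) := by
  rw [ContinuousLinearMap.nonneg_iff_isPositive]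
  constructor
  · have h1 : IsSelfAdjoint (ContinuousLinearMap.adjoint T ∘L T) := by
      rw [ContinuousLinearMap.isSelfAdjoint_iff']
      rw [ContinuousLinearMap.adjoint_comp, ContinuousLinearMap.adjoint_adjoint]
    exact ContinuousLinearMap.isSelfAdjoint_iff_isSymmetric.mp ((IsSelfAdjoint.one _).sub h1)
  · intro x
    have hx : ‖T x‖ ≤ ‖x‖ := by
      calc ‖T x‖ ≤ ‖T‖ * ‖x‖ := T.le_opNorm x
        _ ≤ 1 * ‖x‖ := by gcongr
        _ = ‖x‖ := one_mul _
    have : (1 - ContinuousLinearMap.adjoint T ∘L T).reApplyInnerSelf x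
        = ‖x‖ ^ 2 - ‖T x‖ ^ 2 := by
      simp only [ContinuousLinearMap.reApplyInnerSelf_apply, ContinuousLinearMap.sub_apply,
        ContinuousLinearMap.one_apply, ContinuousLinearMap.comp_apply, inner_sub_left,
        ContinuousLinearMap.adjoint_inner_left, map_sub]
      rw [inner_self_eq_norm_sq, inner_self_eq_norm_sq]
    rw [this]
    nlinarith [norm_nonneg (T x), norm_nonneg x]

open scoped InnerProductSpace in
set_option maxHeartbeats 4000000 in
set_option synthInstance.maxHeartbeats 1000000 in
/-- Every contraction `T : K → H` between complex Hilbert spaces dilates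
to a unitary on the Hilbert direct sum `K ⊕ H`: the operator
`U_T(k, h) = ((1 - T*T)^{1/2} k + T* h, T k - (1 - TT*)^{1/2} h)` is unitary (here realised
as a surjective linear isometry of `K ⊕₂ H`), and `T k = P (U_T (ι k))` for every `k ∈ K`,
where `ι k = (k, 0)` and `P (k, h) = h`. -/
theorem contraction_unitary_dilation {K H : Type*}
    [NormedAddCommGroup K] [InnerProductSpace ℂ K] [CompleteSpace K]
    [NormedAddCommGroup H] [InnerProductSpace ℂ H] [CompleteSpace H]
    (T : K →L[ℂ] H) (hT : ‖T‖ ≤ 1) :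
    ∃ U : WithLp 2 (K × H) ≃ₗᵢ[ℂ] WithLp 2 (K × H),
      (∀ k h, U ((WithLp.equiv 2 (K × H)).symm (k, h)) =
          (WithLp.equiv 2 (K × H)).symm
            (CFC.sqrt (1 - ContinuousLinearMap.adjoint T ∘L T) k +
                ContinuousLinearMap.adjoint T h,
              T k - CFC.sqrt (1 - T ∘L ContinuousLinearMap.adjoint T) h)) ∧
      ∀ k : K, T k = (WithLp.equiv 2 (K × H) (U ((WithLp.equiv 2 (K × H)).symm (k, 0)))).2 := by
  set T' := ContinuousLinearMap.adjoint T with hT'def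
  set D := CFC.sqrt (1 - T' ∘L T) with hDdef
  set D' := CFC.sqrt (1 - T ∘L T') with hD'def
  -- positivity facts
  have hA : 0 ≤ 1 - T' ∘L T := one_sub_adjoint_comp_self_nonneg T hT
  have hT'norm : ‖T'‖ ≤ 1 := by
    rw [hT'def, ContinuousLinearMap.adjoint.norm_map]; exact hT
  have hB : 0 ≤ 1 - T ∘L T' := by
    have := one_sub_adjoint_comp_self_nonneg T' hT'norm
    rwa [hT'def, ContinuousLinearMap.adjoint_adjoint] at this
  have hDpos : 0 ≤ D := CFC.sqrt_nonneg _
  have hD'pos : 0 ≤ D' := CFC.sqrt_nonneg _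
  have hDsa : IsSelfAdjoint D := IsSelfAdjoint.of_nonneg hDpos
  have hD'sa : IsSelfAdjoint D' := IsSelfAdjoint.of_nonneg hD'pos
  have hDsym : ∀ x y, ⟪D x, y⟫_ℂ = ⟪x, D y⟫_ℂ :=
    (ContinuousLinearMap.isSelfAdjoint_iff_isSymmetric.mp hDsa)
  have hD'sym : ∀ x y, ⟪D' x, y⟫_ℂ = ⟪x, D' y⟫_ℂ :=
    (ContinuousLinearMap.isSelfAdjoint_iff_isSymmetric.mp hD'sa)
  have hD2e : ∀ k, D (D k) = k - T' (T k) := by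
    intro k
    have h := ContinuousLinearMap.ext_iff.mp (CFC.sqrt_mul_sqrt_self _ hA) k
    rw [ContinuousLinearMap.mul_def] at h
    simpa using h
  have hD'2e : ∀ h, D' (D' h) = h - T (T' h) := by
    intro x
    have h := ContinuousLinearMap.ext_iff.mp (CFC.sqrt_mul_sqrt_self _ hB) x
    rw [ContinuousLinearMap.mul_def] at h
    simpa using h
  -- the block operators on `WithLp 2 (K × H)`
  set e : WithLp 2 (K × H) ≃L[ℂ] K × H := WithLp.prodContinuousLinearEquiv 2 ℂ K H with hedef
  set S : WithLp 2 (K × H) →L[ℂ] WithLp 2 (K × H) :=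
    (e.symm : (K × H) →L[ℂ] WithLp 2 (K × H)) ∘L
      (((T' ∘L ContinuousLinearMap.snd ℂ K H).prod (T ∘L ContinuousLinearMap.fst ℂ K H)) ∘L
        (e : WithLp 2 (K × H) →L[ℂ] (K × H))) with hSdef
  set W : WithLp 2 (K × H) →L[ℂ] WithLp 2 (K × H) :=
    (e.symm : (K × H) →L[ℂ] WithLp 2 (K × H)) ∘L
      (((D ∘L ContinuousLinearMap.fst ℂ K H).prod (D' ∘L ContinuousLinearMap.snd ℂ K H)) ∘L
        (e : WithLp 2 (K × H) →L[ℂ] (K × H))) with hWdef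
  have hS : ∀ x : WithLp 2 (K × H), S x = (WithLp.equiv 2 (K × H)).symm (T' x.snd, T x.fst) :=
    fun x => rfl
  have hW : ∀ x : WithLp 2 (K × H), W x = (WithLp.equiv 2 (K × H)).symm (D x.fst, D' x.snd) :=
    fun x => rfl
  have ext2 : ∀ x y : WithLp 2 (K × H), x.fst = y.fst → x.snd = y.snd → x = y := by
    intro x y h1 h2
    apply (WithLp.equiv 2 (K × H)).injective
    apply Prod.ext
    · rwa [WithLp.equiv_fst, WithLp.equiv_fst]
    · rwa [WithLp.equiv_snd, WithLp.equiv_snd]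
  have hSsa : IsSelfAdjoint S := by
    rw [ContinuousLinearMap.isSelfAdjoint_iff_isSymmetric]
    intro x y
    show ⟪S x, y⟫_ℂ = ⟪x, S y⟫_ℂ
    rw [hS x, hS y, WithLp.prod_inner_apply', WithLp.prod_inner_apply',
      WithLp.equiv_symm_fst, WithLp.equiv_symm_snd, WithLp.equiv_symm_fst, WithLp.equiv_symm_snd,
      ContinuousLinearMap.adjoint_inner_left, ← ContinuousLinearMap.adjoint_inner_right (A := T)]
    ring
  have hWsa : IsSelfAdjoint W := by
    rw [ContinuousLinearMap.isSelfAdjoint_iff_isSymmetric]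
    intro x y
    show ⟪W x, y⟫_ℂ = ⟪x, W y⟫_ℂ
    rw [hW x, hW y, WithLp.prod_inner_apply', WithLp.prod_inner_apply',
      WithLp.equiv_symm_fst, WithLp.equiv_symm_snd, WithLp.equiv_symm_fst, WithLp.equiv_symm_snd,
      hDsym, hD'sym]
  have hWpos : 0 ≤ W := by
    rw [ContinuousLinearMap.nonneg_iff_isPositive]
    refine ⟨ContinuousLinearMap.isSelfAdjoint_iff_isSymmetric.mp hWsa, fun x => ?_⟩
    have hd := (ContinuousLinearMap.nonneg_iff_isPositive D).mp hDpos
    have hd' := (ContinuousLinearMap.nonneg_iff_isPositive D').mp hD'pos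
    have : W.reApplyInnerSelf x
        = RCLike.re (⟪D x.fst, x.fst⟫_ℂ) + RCLike.re (⟪D' x.snd, x.snd⟫_ℂ) := by
      rw [ContinuousLinearMap.reApplyInnerSelf_apply, hW x, WithLp.prod_inner_apply',
        WithLp.equiv_symm_fst, WithLp.equiv_symm_snd, map_add]
    rw [this]
    exact add_nonneg (hd.re_inner_nonneg_left x.fst) (hd'.re_inner_nonneg_left x.snd)
  have hWW : W * W = 1 - S * S := by
    ext x
    apply ext2
    · rw [ContinuousLinearMap.mul_apply, hW (W x), hW x, WithLp.equiv_symm_fst,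
        WithLp.equiv_symm_fst, WithLp.equiv_symm_snd]
      rw [ContinuousLinearMap.sub_apply, ContinuousLinearMap.one_apply,
        ContinuousLinearMap.mul_apply, hS (S x), hS x,
        WithLp.sub_fst, WithLp.equiv_symm_fst, WithLp.equiv_symm_fst, WithLp.equiv_symm_snd]
      exact hD2e x.fst
    · rw [ContinuousLinearMap.mul_apply, hW (W x), hW x, WithLp.equiv_symm_snd,
        WithLp.equiv_symm_fst, WithLp.equiv_symm_snd]
      rw [ContinuousLinearMap.sub_apply, ContinuousLinearMap.one_apply,
        ContinuousLinearMap.mul_apply, hS (S x), hS x,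
        WithLp.sub_snd, WithLp.equiv_symm_snd, WithLp.equiv_symm_fst, WithLp.equiv_symm_snd]
      exact hD'2e x.snd
  have hM : 0 ≤ 1 - S * S := by
    have h := star_mul_self_nonneg W
    rwa [hWsa.star_eq, hWW] at h
  have hcommMS : Commute (1 - S * S) S := by
    have := (Commute.refl S).mul_left (Commute.refl S)
    exact (Commute.one_left S).sub_left this
  have hWS : Commute W S := by
    have h := commute_cfc_sqrt_of_commute hM hSsa hcommMS
    rwa [CFC.sqrt_unique hWW hWpos] at h
  -- intertwining relations
  have hTD : ∀ k : K, T (D k) = D' (T k) := by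
    intro k
    have h := ContinuousLinearMap.ext_iff.mp hWS.symm.eq ((WithLp.equiv 2 (K × H)).symm (k, 0))
    rw [ContinuousLinearMap.mul_apply, ContinuousLinearMap.mul_apply] at h
    have h2 := congrArg (fun z : WithLp 2 (K × H) => z.snd) h
    simp only [hS, hW, WithLp.equiv_symm_fst, WithLp.equiv_symm_snd, map_zero] at h2
    exact h2
  have hDT' : ∀ x : H, D (T' x) = T' (D' x) := by
    intro x
    have h := ContinuousLinearMap.ext_iff.mp hWS.eq ((WithLp.equiv 2 (K × H)).symm (0, x))
    rw [ContinuousLinearMap.mul_apply, ContinuousLinearMap.mul_apply] at h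
    have h2 := congrArg (fun z : WithLp 2 (K × H) => z.fst) h
    simp only [hS, hW, WithLp.equiv_symm_fst, WithLp.equiv_symm_snd, map_zero] at h2
    exact h2
  -- the dilation operator
  set U0 : WithLp 2 (K × H) →L[ℂ] WithLp 2 (K × H) :=
    (e.symm : (K × H) →L[ℂ] WithLp 2 (K × H)) ∘L
      ((((D ∘L ContinuousLinearMap.fst ℂ K H) + (T' ∘L ContinuousLinearMap.snd ℂ K H)).prod
        ((T ∘L ContinuousLinearMap.fst ℂ K H) - (D' ∘L ContinuousLinearMap.snd ℂ K H))) ∘L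
        (e : WithLp 2 (K × H) →L[ℂ] (K × H))) with hU0def
  have hU0 : ∀ x : WithLp 2 (K × H),
      U0 x = (WithLp.equiv 2 (K × H)).symm (D x.fst + T' x.snd, T x.fst - D' x.snd) :=
    fun x => rfl
  have hU0invol : ∀ x : WithLp 2 (K × H), U0 (U0 x) = x := by
    intro x
    apply ext2
    · show D (D x.fst + T' x.snd) + T' (T x.fst - D' x.snd) = x.fst
      rw [map_add, map_sub, hD2e, hDT']
      module
    · show T (D x.fst + T' x.snd) - D' (T x.fst - D' x.snd) = x.snd
      rw [map_add, map_sub, hTD, hD'2e]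
      module
  have hU0sym : ∀ x y : WithLp 2 (K × H), ⟪U0 x, y⟫_ℂ = ⟪x, U0 y⟫_ℂ := by
    intro x y
    rw [hU0 x, hU0 y, WithLp.prod_inner_apply', WithLp.prod_inner_apply',
      WithLp.equiv_symm_fst, WithLp.equiv_symm_snd, WithLp.equiv_symm_fst, WithLp.equiv_symm_snd,
      inner_add_left, inner_sub_left, inner_add_right, inner_sub_right,
      hDsym, hD'sym, ContinuousLinearMap.adjoint_inner_left,
      ← ContinuousLinearMap.adjoint_inner_right (A := T),
      ← ContinuousLinearMap.adjoint_inner_left (A := T)]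
    ring
  have hnorm : ∀ x : WithLp 2 (K × H), ‖U0 x‖ = ‖x‖ := by
    intro x
    have h : ⟪U0 x, U0 x⟫_ℂ = ⟪x, x⟫_ℂ := by rw [hU0sym x (U0 x), hU0invol]
    rw [norm_eq_sqrt_re_inner (𝕜 := ℂ), norm_eq_sqrt_re_inner (𝕜 := ℂ) x, h]
  set Ueq : WithLp 2 (K × H) ≃ₗ[ℂ] WithLp 2 (K × H) :=
    LinearEquiv.ofLinear (U0 : _ →ₗ[ℂ] _) (U0 : _ →ₗ[ℂ] _)
      (by exact LinearMap.ext fun x => hU0invol x) (by exact LinearMap.ext fun x => hU0invol x) with hUeq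
  set U : WithLp 2 (K × H) ≃ₗᵢ[ℂ] WithLp 2 (K × H) := ⟨Ueq, fun x => hnorm x⟩ with hU
  have hUapp : ∀ x : WithLp 2 (K × H), U x = U0 x := fun x => rfl
  refine ⟨U, ?_, ?_⟩
  · intro k h
    rw [hUapp, hU0, WithLp.equiv_symm_fst, WithLp.equiv_symm_snd]
  · intro k
    rw [hUapp, hU0, WithLp.equiv_symm_fst, WithLp.equiv_symm_snd, Equiv.apply_symm_apply]
    simp
end

section
/- Let K and H be complex Hilbert spaces, let T : K → H be a bounded linear contraction (‖T‖ ≤ 1), and let u be a unitary operator on K and v a unitary operator on H such that T ∘ u = v ∘ T. Then the unitary dilation U_T on K ⊕ H, defined by U_T(k, h) = ((1_K − T*T)^{1/2} k + T* h, T k − (1_H − TT*)^{1/2} h), commutes with the unitary u ⊕ v on K ⊕ H, i.e., U_T ∘ (u ⊕ v) = (u ⊕ v) ∘ U_T. -/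
set_option maxHeartbeats 1000000 in
set_option synthInstance.maxHeartbeats 1000000 in
lemma sqrt_comm_of_unitary {K : Type*}
    [NormedAddCommGroup K] [InnerProductSpace ℂ K] [CompleteSpace K]
    (a u : K →L[ℂ] K) (ha : 0 ≤ a) (hu : u ∈ unitary (K →L[ℂ] K))
    (hcomm : star u * a * u = a) :
    CFC.sqrt a * u = u * CFC.sqrt a := by
  have h1 : star u * u = 1 := hu.1
  have h2 : u * star u = 1 := hu.2
  have hb : (0 : K →L[ℂ] K) ≤ star u * CFC.sqrt a * u :=
    star_left_conjugate_nonneg (CFC.sqrt_nonneg a) u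
  have hsq : (star u * CFC.sqrt a * u) * (star u * CFC.sqrt a * u) = a := by
    calc (star u * CFC.sqrt a * u) * (star u * CFC.sqrt a * u)
        = star u * CFC.sqrt a * (u * star u) * CFC.sqrt a * u := by
          simp only [mul_assoc]
      _ = star u * (CFC.sqrt a * CFC.sqrt a) * u := by
          rw [h2]; simp only [mul_one, mul_assoc]
      _ = star u * a * u := by rw [CFC.sqrt_mul_sqrt_self a ha]
      _ = a := hcomm
  have key : star u * CFC.sqrt a * u = CFC.sqrt a := (CFC.sqrt_unique hsq hb).symm
  calc CFC.sqrt a * u = u * (star u * CFC.sqrt a * u) := by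
        rw [← mul_assoc, ← mul_assoc, h2, one_mul]
    _ = u * CFC.sqrt a := by rw [key]

set_option maxHeartbeats 1000000 in
set_option synthInstance.maxHeartbeats 1000000 in
/-- Let `T : K → H` be a contraction between complex Hilbert spaces and
let `u`, `v` be unitaries on `K`, `H` with `T ∘ u = v ∘ T`. Then the unitary dilation
`U_T(k, h) = ((1 - T*T)^{1/2} k + T* h, T k - (1 - TT*)^{1/2} h)` commutes with `u ⊕ v`,
i.e. `U_T ((u ⊕ v)(k, h)) = (u ⊕ v) (U_T (k, h))` for all `k ∈ K`, `h ∈ H`. -/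
theorem dilation_commutes_with_unitaries {K H : Type*}
    [NormedAddCommGroup K] [InnerProductSpace ℂ K] [CompleteSpace K]
    [NormedAddCommGroup H] [InnerProductSpace ℂ H] [CompleteSpace H]
    (T : K →L[ℂ] H) (hT : ‖T‖ ≤ 1)
    (u : K →L[ℂ] K) (hu : u ∈ unitary (K →L[ℂ] K))
    (v : H →L[ℂ] H) (hv : v ∈ unitary (H →L[ℂ] H))
    (huv : T ∘L u = v ∘L T) :
    ∀ (k : K) (h : H),
      (CFC.sqrt (1 - ContinuousLinearMap.adjoint T ∘L T) (u k) +
          ContinuousLinearMap.adjoint T (v h),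
        T (u k) - CFC.sqrt (1 - T ∘L ContinuousLinearMap.adjoint T) (v h)) =
      (u (CFC.sqrt (1 - ContinuousLinearMap.adjoint T ∘L T) k +
          ContinuousLinearMap.adjoint T h),
        v (T k - CFC.sqrt (1 - T ∘L ContinuousLinearMap.adjoint T) h)) := by
  intro k h
  set S := ContinuousLinearMap.adjoint T with hS
  have hu1 : star u * u = 1 := hu.1
  have hu2 : u * star u = 1 := hu.2
  have hv1 : star v * v = 1 := hv.1
  have hv2 : v * star v = 1 := hv.2
  have hu2' : u ∘L ContinuousLinearMap.adjoint u = 1 := by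
    rw [← ContinuousLinearMap.star_eq_adjoint]; exact hu2
  have hu1' : ContinuousLinearMap.adjoint u ∘L u = 1 := by
    rw [← ContinuousLinearMap.star_eq_adjoint]; exact hu1
  have hv1' : ContinuousLinearMap.adjoint v ∘L v = 1 := by
    rw [← ContinuousLinearMap.star_eq_adjoint]; exact hv1
  have hv2' : v ∘L ContinuousLinearMap.adjoint v = 1 := by
    rw [← ContinuousLinearMap.star_eq_adjoint]; exact hv2
  -- adjoint relation: u* T* = T* v*
  have hadj : ContinuousLinearMap.adjoint u ∘L S = S ∘L ContinuousLinearMap.adjoint v := by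
    rw [hS, ← ContinuousLinearMap.adjoint_comp, ← ContinuousLinearMap.adjoint_comp, huv]
  -- T* v = u T*
  have hTv : S ∘L v = u ∘L S := by
    have e0 : S = u ∘L (S ∘L ContinuousLinearMap.adjoint v) := by
      rw [← hadj, ← ContinuousLinearMap.comp_assoc, hu2', ContinuousLinearMap.one_def,
        ContinuousLinearMap.id_comp]
    calc S ∘L v = (u ∘L (S ∘L ContinuousLinearMap.adjoint v)) ∘L v := by rw [← e0]
      _ = u ∘L S ∘L (ContinuousLinearMap.adjoint v ∘L v) := by
          simp only [ContinuousLinearMap.comp_assoc]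
      _ = u ∘L S := by
          rw [hv1', ContinuousLinearMap.one_def, ContinuousLinearMap.comp_id]
  -- nonnegativity
  have hTT : (0 : K →L[ℂ] K) ≤ S ∘L T := by
    rw [ContinuousLinearMap.nonneg_iff_isPositive]
    have := ContinuousLinearMap.isPositive_one (E := H).adjoint_conj T
    simpa [hS, ContinuousLinearMap.one_def, ContinuousLinearMap.id_comp] using this
  have hTT' : (0 : H →L[ℂ] H) ≤ T ∘L S := by
    rw [ContinuousLinearMap.nonneg_iff_isPositive]
    have := ContinuousLinearMap.isPositive_one (E := K).adjoint_conj S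
    simpa [hS, ContinuousLinearMap.adjoint_adjoint, ContinuousLinearMap.one_def,
      ContinuousLinearMap.id_comp] using this
  have hnormS : ‖S‖ = ‖T‖ := ContinuousLinearMap.adjoint.norm_map T
  have hle : S ∘L T ≤ 1 := by
    rw [← CStarAlgebra.norm_le_one_iff_of_nonneg _ hTT]
    calc ‖S ∘L T‖ ≤ ‖S‖ * ‖T‖ := ContinuousLinearMap.opNorm_comp_le _ _
      _ ≤ 1 * 1 := by
          rw [hnormS]
          exact mul_le_mul hT hT (norm_nonneg _) zero_le_one
      _ = 1 := one_mul 1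
  have hle' : T ∘L S ≤ 1 := by
    rw [← CStarAlgebra.norm_le_one_iff_of_nonneg _ hTT']
    calc ‖T ∘L S‖ ≤ ‖T‖ * ‖S‖ := ContinuousLinearMap.opNorm_comp_le _ _
      _ ≤ 1 * 1 := by
          rw [hnormS]
          exact mul_le_mul hT hT (norm_nonneg _) zero_le_one
      _ = 1 := one_mul 1
  have hpos : (0 : K →L[ℂ] K) ≤ 1 - S ∘L T := sub_nonneg.mpr hle
  have hpos' : (0 : H →L[ℂ] H) ≤ 1 - T ∘L S := sub_nonneg.mpr hle'
  -- conjugation identities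
  have hcommK : (S ∘L T) * u = u * (S ∘L T) := by
    calc (S ∘L T) * u = S ∘L (T ∘L u) := by
          rw [ContinuousLinearMap.mul_def, ContinuousLinearMap.comp_assoc]
      _ = (S ∘L v) ∘L T := by rw [huv, ContinuousLinearMap.comp_assoc]
      _ = (u ∘L S) ∘L T := by rw [hTv]
      _ = u * (S ∘L T) := by rw [ContinuousLinearMap.mul_def, ContinuousLinearMap.comp_assoc]
  have hcommH : (T ∘L S) * v = v * (T ∘L S) := by
    calc (T ∘L S) * v = T ∘L (S ∘L v) := by
          rw [ContinuousLinearMap.mul_def, ContinuousLinearMap.comp_assoc]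
      _ = (T ∘L u) ∘L S := by rw [hTv, ContinuousLinearMap.comp_assoc]
      _ = (v ∘L T) ∘L S := by rw [huv]
      _ = v * (T ∘L S) := by rw [ContinuousLinearMap.mul_def, ContinuousLinearMap.comp_assoc]
  have hconj : star u * (1 - S ∘L T) * u = 1 - S ∘L T := by
    rw [mul_sub, sub_mul, mul_one, hu1, mul_assoc, hcommK, ← mul_assoc, hu1, one_mul]
  have hconj' : star v * (1 - T ∘L S) * v = 1 - T ∘L S := by
    rw [mul_sub, sub_mul, mul_one, hv1, mul_assoc, hcommH, ← mul_assoc, hv1, one_mul]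
  have hc1 : CFC.sqrt (1 - S ∘L T) * u = u * CFC.sqrt (1 - S ∘L T) :=
    sqrt_comm_of_unitary _ u hpos hu hconj
  have hc2 : CFC.sqrt (1 - T ∘L S) * v = v * CFC.sqrt (1 - T ∘L S) :=
    sqrt_comm_of_unitary _ v hpos' hv hconj'
  have e1 : CFC.sqrt (1 - S ∘L T) (u k) = u (CFC.sqrt (1 - S ∘L T) k) := by
    have := ContinuousLinearMap.ext_iff.mp hc1 k
    simpa [ContinuousLinearMap.mul_def] using this
  have e2 : S (v h) = u (S h) := by
    have := ContinuousLinearMap.ext_iff.mp hTv h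
    simpa using this
  have e3 : T (u k) = v (T k) := by
    have := ContinuousLinearMap.ext_iff.mp huv k
    simpa using this
  have e4 : CFC.sqrt (1 - T ∘L S) (v h) = v (CFC.sqrt (1 - T ∘L S) h) := by
    have := ContinuousLinearMap.ext_iff.mp hc2 h
    simpa [ContinuousLinearMap.mul_def] using this
  simp [e1, e2, e3, e4, map_add, map_sub]
end
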